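/- arXiv:1801.07197 — 2 statements merged into one kernel-verified Lean document; each statement's English description precedes it below -/
import Mathlib

section
/- Let Γ be a finitely generated residually finite group and let k be a positive integer. Suppose there exist a finite index subgroup Δ of Γ and elements g_1, …, g_k ∈ Γ such that the left-normed commutator [a_1, …, a_k] equals 1 for all a_1 ∈ g_1Δ, …, a_k ∈ g_kΔ. Then there exists a finite index subgroup Δ_0 of Γ with γ_k(Δ_0) = 1. -/
open scoped Classical

/-- The commutator `[x, y] = x⁻¹y⁻¹xy` (the convention used in the paper). -/
def pcomm {G : Type*} [Group G] (x y : G) : G := x⁻¹ * y⁻¹ * x * y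

/-- The left-normed commutator word `w_k = [x₁, …, x_k] ∈ F_k`,
defined inductively by `w₁ = x₁` and `w_{j+1} = [w_j, x_{j+1}]`. -/
def commWord : (k : ℕ) → FreeGroup (Fin k)
  | 0 => 1
  | 1 => FreeGroup.of 0
  | (k + 2) =>
      pcomm (FreeGroup.map Fin.castSucc (commWord (k + 1))) (FreeGroup.of (Fin.last (k + 1)))

/-- The left-normed commutator `[g₁, …, g_k]` of group elements. -/
def commElt {G : Type*} [Group G] : {k : ℕ} → (Fin k → G) → G
  | 0, _ => 1
  | 1, f => f 0
  | (_ + 2), f => pcomm (commElt (fun i => f i.castSucc)) (f (Fin.last _))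

/-- The word `[x₁², x₂, …, x_k] ∈ F_k`, defined inductively by
`u₁ = x₁²` and `u_{j+1} = [u_j, x_{j+1}]`. -/
def sqCommWord : (k : ℕ) → FreeGroup (Fin k)
  | 0 => 1
  | 1 => FreeGroup.of 0 ^ 2
  | (k + 2) =>
      pcomm (FreeGroup.map Fin.castSucc (sqCommWord (k + 1))) (FreeGroup.of (Fin.last (k + 1)))

/-- `P_{G,w}(g) = |w_G⁻¹(g)| / |G|^k`, the probability that the word map of `w`
takes the value `g` on a uniformly random `k`-tuple. -/
noncomputable def wordProb {k : ℕ} {G : Type*} [Group G] (w : FreeGroup (Fin k)) (g : G) : ℝ :=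
  (Nat.card {f : Fin k → G // FreeGroup.lift f w = g} : ℝ) / (Nat.card G : ℝ) ^ k

/-- A group is residually finite if every nontrivial element is excluded by
some normal subgroup of finite index. -/
def ResiduallyFinite (Γ : Type*) [Group Γ] : Prop :=
  ∀ g : Γ, g ≠ 1 → ∃ Δ : Subgroup Γ, Δ.Normal ∧ Δ.FiniteIndex ∧ g ∉ Δ

/-- A word `w ≠ 1` is a probabilistic identity of `Γ` if for some `ε > 0` every
finite quotient `H` of `Γ` satisfies `P_{H,w}(1) ≥ ε`. -/
def IsProbIdentity {k : ℕ} (Γ : Type*) [Group Γ] (w : FreeGroup (Fin k)) : Prop :=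
  w ≠ 1 ∧ ∃ ε : ℝ, 0 < ε ∧
    ∀ (Δ : Subgroup Γ) [Δ.Normal], Δ.FiniteIndex → ε ≤ wordProb w (1 : Γ ⧸ Δ)

/-- `G(H)`: the intersection of the kernels of all homomorphisms from `G` to `H`. -/
def kerInt (G H : Type*) [Group G] [Group H] : Subgroup G := ⨅ φ : G →* H, φ.ker

/-- A word `1 ≠ w ∈ F_k` is good if for every `ε > 0` there is a word `1 ≠ v ∈ F_m`,
depending only on `w` and `ε`, which is an identity of every finite group `G`
satisfying `P_{G,w}(g) ≥ ε` for some `g ∈ G`. -/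
def IsGood {k : ℕ} (w : FreeGroup (Fin k)) : Prop :=
  w ≠ 1 ∧ ∀ ε : ℝ, 0 < ε → ∃ (m : ℕ) (v : FreeGroup (Fin m)), v ≠ 1 ∧
    ∀ (G : Type) [Group G] [Finite G],
      (∃ g : G, ε ≤ wordProb w g) → ∀ f : Fin m → G, FreeGroup.lift f v = 1


section B
variable {G : Type*} [Group G]

lemma pcomm_eq_one_iff {x y : G} : pcomm x y = 1 ↔ x * y = y * x := by
  rw [pcomm, mul_assoc, mul_assoc, inv_mul_eq_one, eq_inv_mul_iff_mul_eq]
  exact eq_comm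

lemma commElt_eq_foldl : ∀ (m : ℕ) (f : Fin (m + 1) → G),
    commElt f = (List.ofFn fun i : Fin m => f i.succ).foldl pcomm (f 0)
  | 0, f => by simp [commElt]
  | (m + 1), f => by
      show pcomm (commElt fun i => f i.castSucc) (f (Fin.last _)) = _
      rw [commElt_eq_foldl m (fun i => f i.castSucc)]
      rw [List.ofFn_succ' (fun i : Fin (m + 1) => f i.succ)]
      rw [List.concat_eq_append, List.foldl_append]
      show pcomm _ _ = pcomm _ _
      simp only [Fin.succ_castSucc, Fin.succ_last, Fin.castSucc_zero]

lemma foldl_eq_one_of_commElt (x : G) (l : List G)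
    (H : ∀ f : Fin (l.length + 1) → G, commElt f = 1) : l.foldl pcomm x = 1 := by
  have := H (fun i => Fin.cases x (fun j => l.get j) i)
  rw [commElt_eq_foldl, Fin.cases_zero] at this
  have heq : (fun i : Fin l.length => (Fin.cases x (fun j => l.get j) i.succ : G)) = l.get :=
    funext fun i => by simp
  rw [heq, List.ofFn_get] at this
  exact this

lemma commElt_map {H : Type*} [Group H] (φ : G →* H) :
    ∀ {k : ℕ} (f : Fin k → G), φ (commElt f) = commElt (fun i => φ (f i))
  | 0, f => by simp [commElt]
  | 1, f => rfl
  | (k + 2), f => by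
      show φ (pcomm (commElt fun i => f i.castSucc) (f (Fin.last _))) = _
      show φ ((commElt fun i => f i.castSucc)⁻¹ * (f (Fin.last _))⁻¹ *
        (commElt fun i => f i.castSucc) * (f (Fin.last _))) = _
      rw [map_mul, map_mul, map_mul, map_inv, map_inv, commElt_map φ (fun i => f i.castSucc)]
      rfl

lemma centralizer_normal {Γ : Type*} [Group Γ] {N : Subgroup Γ} (hN : N.Normal) :
    (Subgroup.centralizer (N : Set Γ)).Normal := by
  constructor
  intro x hx g
  rw [Subgroup.mem_centralizer_iff] at hx ⊢
  intro h hh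
  have h1 : g⁻¹ * h * g ∈ N := by simpa using hN.conj_mem h hh g⁻¹
  have h2 := hx _ h1
  calc h * (g * x * g⁻¹) = g * ((g⁻¹ * h * g) * x) * g⁻¹ := by group
    _ = g * (x * (g⁻¹ * h * g)) * g⁻¹ := by rw [h2]
    _ = g * x * g⁻¹ * h := by group

end B

universe u

lemma coset_identity_to_identity : ∀ (k : ℕ) (Γ : Type u) [inst : Group Γ] (N : Subgroup Γ),
    N.Normal → ∀ (g : Fin k → Γ),
    (∀ a : Fin k → Γ, (∀ i, (g i)⁻¹ * a i ∈ N) → commElt a = 1) →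
    ∀ b : Fin k → Γ, (∀ i, b i ∈ N) → commElt b = 1
  | 0, Γ, inst, N, hN, g, hyp, b, hb => rfl
  | 1, Γ, inst, N, hN, g, hyp, b, hb => by
      have h1 : g 0 = 1 := hyp g (fun i => by simpa using N.one_mem)
      have h2 : g 0 * b 0 = 1 := hyp (fun _ => g 0 * b 0) (fun i => by
        have hi : i = 0 := Subsingleton.elim i 0
        subst hi
        simpa using hb 0)
      show b 0 = 1
      rw [h1, one_mul] at h2
      exact h2
  | (k + 2), Γ, inst, N, hN, g, hyp, b, hb => by
      classical
      set C := Subgroup.centralizer (N : Set Γ) with hC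
      have hCn : C.Normal := centralizer_normal hN
      -- Step 1: commutators of length k+1 over the cosets land in the centralizer of N
      have step1 : ∀ a : Fin (k + 1) → Γ, (∀ i, (g i.castSucc)⁻¹ * a i ∈ N) →
          commElt a ∈ C := by
        intro a ha
        have key1 : ∀ n ∈ N, commElt a * (g (Fin.last (k + 1)) * n)
            = (g (Fin.last (k + 1)) * n) * commElt a := by
          intro n hn
          set z := g (Fin.last (k + 1)) * n with hz
          set A : Fin (k + 2) → Γ := Fin.snoc a z with hA
          have hmem : ∀ i : Fin (k + 2), (g i)⁻¹ * A i ∈ N := by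
            intro i
            induction i using Fin.lastCases with
            | last =>
                have : A (Fin.last (k + 1)) = z := by rw [hA]; exact Fin.snoc_last ..
                rw [this, hz]; simpa using hn
            | cast j =>
                have : A j.castSucc = a j := by rw [hA]; exact Fin.snoc_castSucc ..
                rw [this]; exact ha j
          have h1 : commElt A = 1 := hyp _ hmem
          have h2 : commElt A
              = pcomm (commElt fun i : Fin (k + 1) => A i.castSucc)
                (A (Fin.last (k + 1))) := rfl
          rw [h2] at h1
          have h3 : (fun i : Fin (k + 1) => A i.castSucc) = a :=
            funext fun i => by rw [hA]; exact Fin.snoc_castSucc ..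
          have h4 : A (Fin.last (k + 1)) = z := by rw [hA]; exact Fin.snoc_last ..
          rw [h3, h4] at h1
          exact pcomm_eq_one_iff.mp h1
        have c1 : commElt a * g (Fin.last (k + 1)) = g (Fin.last (k + 1)) * commElt a := by
          simpa using key1 1 N.one_mem
        rw [Subgroup.mem_centralizer_iff]
        intro h hh
        apply mul_left_cancel (a := g (Fin.last (k + 1)))
        calc g (Fin.last (k + 1)) * (h * commElt a)
            = (g (Fin.last (k + 1)) * h) * commElt a := (mul_assoc _ _ _).symm
          _ = commElt a * (g (Fin.last (k + 1)) * h) := (key1 h hh).symm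
          _ = (commElt a * g (Fin.last (k + 1))) * h := (mul_assoc _ _ _).symm
          _ = (g (Fin.last (k + 1)) * commElt a) * h := by rw [c1]
          _ = g (Fin.last (k + 1)) * (commElt a * h) := mul_assoc _ _ _
      -- Step 2: pass to the quotient by C and use the inductive hypothesis
      let Q := Γ ⧸ C
      let π : Γ →* Q := QuotientGroup.mk' C
      have hπ : Function.Surjective π := QuotientGroup.mk'_surjective C
      have hN' : (N.map π).Normal := hN.map π hπ
      have hyp' : ∀ a : Fin (k + 1) → Q,
          (∀ i, (π (g i.castSucc))⁻¹ * a i ∈ N.map π) → commElt a = 1 := by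
        intro a ha
        choose n hnN hn using fun i => Subgroup.mem_map.mp (ha i)
        have ha' : a = fun i => π (g i.castSucc * n i) := by
          funext i
          rw [map_mul, hn i, mul_inv_cancel_left]
        rw [ha', ← commElt_map]
        rw [← MonoidHom.mem_ker, QuotientGroup.ker_mk']
        apply step1
        intro i
        simpa using hnN i
      have IH := coset_identity_to_identity (k + 1) Q (N.map π) hN'
        (fun i => π (g i.castSucc)) hyp'
      -- Step 3: conclude
      have hy : commElt (fun i : Fin (k + 1) => b i.castSucc) ∈ C := by
        have h1 : π (commElt fun i : Fin (k + 1) => b i.castSucc) = 1 := by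
          rw [commElt_map]
          exact IH _ (fun i => Subgroup.mem_map_of_mem π (hb i.castSucc))
        rw [← QuotientGroup.ker_mk' C, ← MonoidHom.mem_ker] at *
        exact h1
      have hdef : commElt b
          = pcomm (commElt fun i : Fin (k + 1) => b i.castSucc) (b (Fin.last (k + 1))) := rfl
      rw [hdef, pcomm_eq_one_iff]
      exact ((Subgroup.mem_centralizer_iff.mp hy) _ (hb (Fin.last (k + 1)))).symm


section T
variable {G : Type*} [Group G]

def tSet (G : Type*) [Group G] (m : ℕ) : Set G :=
  {x | ∀ l : List G, l.length = m → l.foldl pcomm x = 1}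

lemma pcomm_conj (h x y : G) : pcomm (h⁻¹ * x * h) (h⁻¹ * y * h) = h⁻¹ * pcomm x y * h := by
  simp only [pcomm]; group

lemma foldl_pcomm_conj (h : G) : ∀ (l : List G) (x : G),
    (l.map fun y => h⁻¹ * y * h).foldl pcomm (h⁻¹ * x * h) = h⁻¹ * (l.foldl pcomm x) * h
  | [], x => rfl
  | y :: l, x => by
      simp only [List.map_cons, List.foldl_cons, pcomm_conj]
      exact foldl_pcomm_conj h l (pcomm x y)

lemma tSet_conj {m : ℕ} {x : G} (hx : x ∈ tSet G m) (h : G) : h⁻¹ * x * h ∈ tSet G m := by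
  intro l hl
  have hmap : (l.map fun y => h * y * h⁻¹).map (fun y => h⁻¹ * y * h) = l := by
    rw [List.map_map]
    have : ((fun y => h⁻¹ * y * h) ∘ fun y : G => h * y * h⁻¹) = id := by
      funext y; simp [mul_assoc]
    rw [this, List.map_id]
  calc l.foldl pcomm (h⁻¹ * x * h)
      = ((l.map fun y => h * y * h⁻¹).map fun y => h⁻¹ * y * h).foldl pcomm (h⁻¹ * x * h) := by
        rw [hmap]
    _ = h⁻¹ * ((l.map fun y => h * y * h⁻¹).foldl pcomm x) * h := foldl_pcomm_conj h _ x
    _ = 1 := by rw [hx _ (by simpa using hl)]; group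

lemma tSet_zero {x : G} : x ∈ tSet G 0 ↔ x = 1 := by
  constructor
  · intro hx; exact hx [] rfl
  · rintro rfl l hl
    rw [List.length_eq_zero_iff] at hl; subst hl; rfl

lemma tSet_succ {m : ℕ} {x : G} : x ∈ tSet G (m + 1) ↔ ∀ g : G, pcomm x g ∈ tSet G m := by
  constructor
  · intro hx g l hl
    exact hx (g :: l) (by simp [hl])
  · intro hx l hl
    cases l with
    | nil => simp at hl
    | cons g l => exact hx g l (by simpa using hl)

lemma one_mem_tSet (m : ℕ) : (1 : G) ∈ tSet G m := by
  have key : ∀ l : List G, l.foldl pcomm 1 = 1 := by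
    intro l
    induction l with
    | nil => rfl
    | cons g l ih => simpa [pcomm] using ih
  intro l _; exact key l

lemma tSet_mul_inv (m : ℕ) :
    (∀ x y : G, x ∈ tSet G m → y ∈ tSet G m → x * y ∈ tSet G m) ∧
    (∀ x : G, x ∈ tSet G m → x⁻¹ ∈ tSet G m) := by
  induction m with
  | zero =>
      constructor
      · intro x y hx hy; rw [tSet_zero] at *; rw [hx, hy, one_mul]
      · intro x hx; rw [tSet_zero] at *; rw [hx, inv_one]
  | succ m ih =>
      constructor
      · intro x y hx hy
        rw [tSet_succ] at *
        intro g
        have hd : pcomm (x * y) g = (y⁻¹ * pcomm x g * y) * pcomm y g := by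
          simp only [pcomm]; group
        rw [hd]
        exact ih.1 _ _ (tSet_conj (hx g) y) (hy g)
      · intro x hx
        rw [tSet_succ] at *
        intro g
        have hd : pcomm x⁻¹ g = (x⁻¹)⁻¹ * (pcomm x g)⁻¹ * x⁻¹ := by
          simp only [pcomm]; group
        rw [hd]
        exact tSet_conj (ih.2 _ (hx g)) x⁻¹

def tSub (G : Type*) [Group G] (m : ℕ) : Subgroup G where
  carrier := tSet G m
  mul_mem' hx hy := (tSet_mul_inv m).1 _ _ hx hy
  one_mem' := one_mem_tSet m
  inv_mem' hx := (tSet_mul_inv m).2 _ hx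

lemma lcs_le_tSub (m : ℕ) (H : ∀ x : G, x ∈ tSet G m) :
    ∀ j : ℕ, Subgroup.lowerCentralSeries (⊤ : Subgroup G) j ≤ tSub G (m - j) := by
  intro j
  induction j with
  | zero => intro x _; exact H x
  | succ j ih =>
      rw [Subgroup.lowerCentralSeries_succ, Subgroup.commutator_def, Subgroup.closure_le]
      rintro x ⟨a, ha, b, -, rfl⟩
      have ha' : a ∈ tSub G (m - j) := ih ha
      show a * b * a⁻¹ * b⁻¹ ∈ (tSub G (m - (j + 1)) : Set G)
      cases hmj : m - j with
      | zero =>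
          rw [hmj] at ha'
          have : a = 1 := tSet_zero.mp ha'
          rw [this]
          simpa using (tSub G (m - (j + 1))).one_mem

      | succ t =>
          have : m - (j + 1) = t := by omega
          rw [this]
          rw [hmj] at ha'
          have hinv : a⁻¹ ∈ tSet G (t + 1) := (tSet_mul_inv (t + 1)).2 a ha'
          have hcomm : a * b * a⁻¹ * b⁻¹ = pcomm a⁻¹ b⁻¹ := by
            simp only [pcomm]; group
          rw [hcomm]
          exact tSet_succ.mp hinv b⁻¹

lemma lcs_eq_bot (m : ℕ) (H : ∀ x : G, x ∈ tSet G m) :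
    Subgroup.lowerCentralSeries (⊤ : Subgroup G) m = ⊥ := by
  rw [eq_bot_iff]
  intro x hx
  have := lcs_le_tSub m H m hx
  rw [Nat.sub_self] at this
  simpa [Subgroup.mem_bot] using tSet_zero.mp this

end T


/-- A coset identity `[g₁Δ, …, g_kΔ] = 1` with `Δ` of finite index in
a finitely generated residually finite group `Γ` forces a finite index subgroup
`Δ₀` with `γ_k(Δ₀) = 1`. -/
theorem stmt2 (Γ : Type*) [Group Γ] (hfg : Group.FG Γ) (hrf : ResiduallyFinite Γ)
    (k : ℕ) (hk : 1 ≤ k)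
    (h : ∃ Δ : Subgroup Γ, Δ.FiniteIndex ∧ ∃ g : Fin k → Γ,
      ∀ a : Fin k → Γ, (∀ i, (g i)⁻¹ * a i ∈ Δ) → commElt a = 1) :
    ∃ Δ₀ : Subgroup Γ, Δ₀.FiniteIndex ∧ Subgroup.lowerCentralSeries (⊤ : Subgroup ↥Δ₀) (k - 1) = ⊥ := by
  obtain ⟨Δ, hΔ, g, hyp⟩ := h
  haveI := hΔ
  refine ⟨Δ.normalCore, inferInstance, ?_⟩
  have hyp' : ∀ a : Fin k → Γ, (∀ i, (g i)⁻¹ * a i ∈ Δ.normalCore) → commElt a = 1 :=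
    fun a ha => hyp a (fun i => Δ.normalCore_le (ha i))
  have hN := coset_identity_to_identity k Γ Δ.normalCore inferInstance g hyp'
  have Hk : ∀ f : Fin k → ↥Δ.normalCore, commElt f = 1 := by
    intro f
    have h1 : ((commElt f : ↥Δ.normalCore) : Γ) = commElt (fun i => ((f i : Γ))) :=
      commElt_map Δ.normalCore.subtype f
    have h2 : commElt (fun i => ((f i : Γ))) = 1 := hN _ (fun i => (f i).2)
    exact Subtype.ext (by rw [h1, h2]; rfl)
  obtain ⟨m, rfl⟩ : ∃ m, k = m + 1 := ⟨k - 1, by omega⟩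
  have Hm : ∀ x : ↥Δ.normalCore, x ∈ tSet (↥Δ.normalCore) m := by
    intro x l hl
    subst hl
    exact foldl_eq_one_of_commElt x l Hk
  simpa using lcs_eq_bot m Hm
end

section
/- Let G be a finite group and suppose P_{G, x_1^2}(g) ≥ ε > 0 for some g ∈ G (that is, the square map x ↦ x^2 takes the value g on at least an ε-proportion of G). Then G(S_n) is abelian, where n = ⌊2/ε²⌋ and G(S_n) is the intersection of the kernels of all homomorphisms from G to the symmetric group S_n. -/
open scoped Classical

theorem kerInt_le_of_index_le {G : Type*} [Group G] [Finite G] {n : ℕ}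
    (H : Subgroup G) (hH : H.index ≤ n) :
    kerInt G (Equiv.Perm (Fin n)) ≤ H := by
  classical
  haveI : Fintype G := Fintype.ofFinite G
  haveI : Fintype (G ⧸ H) := Fintype.ofFinite _
  have hcardQ : Fintype.card (G ⧸ H) ≤ Fintype.card (Fin n) := by
    rw [Fintype.card_fin, ← Nat.card_eq_fintype_card, ← Subgroup.index_eq_card]
    exact hH
  obtain ⟨f⟩ := Function.Embedding.nonempty_of_card_le hcardQ
  intro d hd
  have hd' : d ∈ ⨅ φ : G →* Equiv.Perm (Fin n), φ.ker := hd
  have hmem := Subgroup.mem_iInf.mp hd'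
    ((Equiv.Perm.viaEmbeddingHom f).comp (MulAction.toPermHom G (G ⧸ H)))
  rw [MonoidHom.mem_ker, MonoidHom.comp_apply] at hmem
  have h2 : MulAction.toPermHom G (G ⧸ H) d = 1 :=
    Equiv.Perm.viaEmbeddingHom_injective f (by rw [hmem, map_one])
  have h3 : d • ((1 : G) : G ⧸ H) = ((1 : G) : G ⧸ H) := by
    have := congrArg (fun e : Equiv.Perm (G ⧸ H) => e ((1 : G) : G ⧸ H)) h2
    simpa [MulAction.toPermHom] using this
  have h4 : ((d * 1 : G) : G ⧸ H) = ((1 : G) : G ⧸ H) := by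
    exact h3
  have h5 : (d * 1)⁻¹ * 1 ∈ H := QuotientGroup.eq.mp h4
  simpa using H.inv_mem_iff.mp (by simpa using h5)


/-- If the square map of a finite group `G` takes some value `g` with
probability at least `ε > 0`, then `G(S_n)` is abelian for `n = ⌊2/ε²⌋`. -/
theorem stmt17 (G : Type*) [Group G] [Finite G] (ε : ℝ) (hε : 0 < ε) (g : G)
    (h : ε ≤ wordProb ((FreeGroup.of 0 : FreeGroup (Fin 1)) ^ 2) g)
    (n : ℕ) (hn : n = Nat.floor (2 / ε ^ 2)) :
    IsMulCommutative (kerInt G (Equiv.Perm (Fin n))) := by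
  classical
  haveI : Fintype G := Fintype.ofFinite G
  set N : ℕ := Fintype.card G with hN
  have hNpos : 0 < N := Fintype.card_pos
  set T : Finset G := Finset.univ.filter (fun x => x ^ 2 = g) with hT
  -- Step 1 : ε * N ≤ T.card
  have hw : wordProb ((FreeGroup.of 0 : FreeGroup (Fin 1)) ^ 2) g = (T.card : ℝ) / N := by
    unfold wordProb
    have e : {f : Fin 1 → G // FreeGroup.lift f ((FreeGroup.of 0 : FreeGroup (Fin 1)) ^ 2) = g}
        ≃ {x : G // x ^ 2 = g} :=
      { toFun := fun s => ⟨s.1 0, by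
          have := s.2; rwa [map_pow, FreeGroup.lift_apply_of] at this⟩
        invFun := fun x => ⟨fun _ => x.1, by
          rw [map_pow, FreeGroup.lift_apply_of]; exact x.2⟩
        left_inv := fun s => Subtype.ext (funext fun i => by
          exact congrArg s.1 (Subsingleton.elim 0 i))
        right_inv := fun x => rfl }
    rw [Nat.card_congr e, Nat.card_eq_fintype_card, Fintype.card_subtype,
      Nat.card_eq_fintype_card, pow_one]
  rw [hw] at h
  have hTN : ε * N ≤ (T.card : ℝ) := by
    rw [le_div_iff₀ (by exact_mod_cast hNpos)] at h
    exact h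
  have hTle : (T.card : ℝ) ≤ N := by exact_mod_cast Finset.card_le_card (Finset.subset_univ T)
  have hTpos : (0 : ℝ) < T.card := lt_of_lt_of_le (by positivity) hTN
  have hε1 : ε ≤ 1 := by
    nlinarith [hTN, hTle, (show (0:ℝ) < N by exact_mod_cast hNpos)]
  -- the inversion lemma
  have hinv : ∀ u x : G, x ∈ T → u⁻¹ * x ∈ T → x * u * x⁻¹ = u⁻¹ := by
    intro u x hx hz
    obtain ⟨z, rfl⟩ : ∃ z : G, u = x * z⁻¹ := ⟨u⁻¹ * x, by group⟩
    have hzz : (x * z⁻¹)⁻¹ * x = z := by group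
    rw [hzz] at hz
    rw [hT, Finset.mem_filter] at hx hz
    have hxx : x * x = z * z := by
      rw [← pow_two, ← pow_two, hx.2, hz.2]
    calc x * (x * z⁻¹) * x⁻¹ = (x * x) * z⁻¹ * x⁻¹ := by group
      _ = (z * z) * z⁻¹ * x⁻¹ := by rw [hxx]
      _ = (x * z⁻¹)⁻¹ := by group
  -- the fiber finsets
  set F : G → Finset G := fun u => T.filter (fun x => u⁻¹ * x ∈ T) with hF
  have hsum : ∑ u : G, (F u).card = T.card * T.card := by
    have h1 : ∀ u : G, (F u).card = ∑ x ∈ T, if u⁻¹ * x ∈ T then 1 else 0 := by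
      intro u; exact Finset.card_filter _ _
    rw [Finset.sum_congr rfl (fun u _ => h1 u), Finset.sum_comm]
    have h2 : ∀ x ∈ T, (∑ u : G, if u⁻¹ * x ∈ T then 1 else 0) = T.card := by
      intro x hx
      rw [← Finset.card_filter]
      have himg : Finset.univ.filter (fun u : G => u⁻¹ * x ∈ T) = T.image (fun z => x * z⁻¹) := by
        ext u
        simp only [Finset.mem_filter, Finset.mem_univ, true_and, Finset.mem_image]
        constructor
        · intro hu; exact ⟨u⁻¹ * x, hu, by group⟩
        · rintro ⟨z, hz, rfl⟩
          have : (x * z⁻¹)⁻¹ * x = z := by group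
          rw [this]; exact hz
      rw [himg, Finset.card_image_of_injective _ (fun a b hab => by
        have : x⁻¹ * (x * a⁻¹) = x⁻¹ * (x * b⁻¹) := by rw [hab]
        simpa using inv_injective (by simpa [← mul_assoc] using this))]
    rw [Finset.sum_congr rfl h2, Finset.sum_const, smul_eq_mul]
  -- subgroup card helper
  have cardsub : ∀ H : Subgroup G,
      (Finset.univ.filter (fun v => v ∈ H)).card = Nat.card H := by
    intro H
    rw [Nat.card_eq_fintype_card]
    exact (Fintype.card_subtype _).symm
  -- fiber card bounded by centralizer card
  have hFC : ∀ u : G, (F u).card ≤ Nat.card (Subgroup.centralizer ({u} : Set G)) := by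
    intro u
    rcases (F u).eq_empty_or_nonempty with he | ⟨x₀, hx₀⟩
    · simp [he]
    · rw [← cardsub]
      apply Finset.card_le_card_of_injOn (fun x => x₀⁻¹ * x)
      · intro x hx
        simp only [Finset.mem_coe] at hx ⊢
        simp only [Finset.mem_filter, Finset.mem_univ, true_and]
        rw [Subgroup.mem_centralizer_singleton_iff]
        rw [hF, Finset.mem_filter] at hx hx₀
        have h1 := hinv u x hx.1 hx.2
        have h2 := hinv u x₀ hx₀.1 hx₀.2
        calc (x₀⁻¹ * x) * u = x₀⁻¹ * (x * u * x⁻¹) * x := by group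
          _ = x₀⁻¹ * (x₀ * u * x₀⁻¹) * x := by rw [h1, h2]
          _ = u * (x₀⁻¹ * x) := by group
      · intro a _ b _ hab
        exact mul_left_cancel hab
  -- index bound
  have hidx : ∀ H : Subgroup G, ε ^ 2 * N / 2 ≤ (Nat.card H : ℝ) → H.index ≤ n := by
    intro H hc
    have hm : H.index * Nat.card H = N := by
      rw [hN, ← Nat.card_eq_fintype_card]; exact Subgroup.index_mul_card H
    have hmR : (H.index : ℝ) * (Nat.card H : ℝ) = N := by exact_mod_cast hm
    have hcard_pos : 0 < (Nat.card H : ℝ) := by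
      have : (0:ℝ) < ε ^ 2 * N / 2 := by positivity
      linarith
    have hle : (H.index : ℝ) ≤ 2 / ε ^ 2 := by
      rw [le_div_iff₀ (by positivity)]
      have h1 : (H.index : ℝ) * (ε ^ 2 * N / 2) ≤ (H.index : ℝ) * (Nat.card H : ℝ) :=
        mul_le_mul_of_nonneg_left hc (by positivity)
      rw [hmR] at h1
      have hNR : (0:ℝ) < N := by exact_mod_cast hNpos
      nlinarith
    rw [hn]
    exact Nat.le_floor hle
  -- main commuting claim
  have main : ∀ d₁ d₂ : G, d₁ ∈ kerInt G (Equiv.Perm (Fin n)) →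
      d₂ ∈ kerInt G (Equiv.Perm (Fin n)) → d₁ * d₂ = d₂ * d₁ := by
    intro d₁ d₂ hd₁ hd₂
    by_cases hc : ε ^ 2 * N / 2 ≤ (Nat.card (Subgroup.centralizer ({d₁} : Set G)) : ℝ)
    · have := kerInt_le_of_index_le _ (hidx _ hc) hd₂
      exact (Subgroup.mem_centralizer_singleton_iff.mp this).symm
    · exfalso
      have hex : ∃ u : G, u ∉ Subgroup.centralizer ({d₁} : Set G) ∧
          ε ^ 2 * N / 2 ≤ ((F u).card : ℝ) := by
        by_contra hno
        push_neg at hno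
        set c : ℝ := ε ^ 2 * N / 2 with hcdef
        have hsumR : ∑ u : G, ((F u).card : ℝ) = (T.card : ℝ) * T.card := by
          exact_mod_cast hsum
        set Zd := Subgroup.centralizer ({d₁} : Set G) with hZd
        have hsplit := Finset.sum_filter_add_sum_filter_not Finset.univ
          (fun u : G => u ∈ Zd) (fun u : G => ((F u).card : ℝ))
        have hS1 : ∑ u ∈ Finset.univ.filter (fun u : G => u ∈ Zd), ((F u).card : ℝ)
            < c * T.card := by
          have hb : ∀ u ∈ Finset.univ.filter (fun u : G => u ∈ Zd),
              ((F u).card : ℝ) ≤ (T.card : ℝ) := by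
            intro u _
            exact_mod_cast Finset.card_le_card (Finset.filter_subset _ T)
          calc ∑ u ∈ Finset.univ.filter (fun u : G => u ∈ Zd), ((F u).card : ℝ)
              ≤ (Finset.univ.filter (fun u : G => u ∈ Zd)).card • (T.card : ℝ) :=
                Finset.sum_le_card_nsmul _ _ _ hb
            _ = ((Finset.univ.filter (fun u : G => u ∈ Zd)).card : ℝ) * T.card := by
                rw [nsmul_eq_mul]
            _ < c * T.card := by
                apply mul_lt_mul_of_pos_right _ hTpos
                rw [cardsub Zd]
                exact lt_of_not_ge hc
        have hS2 : ∑ u ∈ Finset.univ.filter (fun u : G => u ∉ Zd), ((F u).card : ℝ)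
            ≤ (N : ℝ) * c := by
          have hb : ∀ u ∈ Finset.univ.filter (fun u : G => u ∉ Zd), ((F u).card : ℝ) ≤ c := by
            intro u hu
            rw [Finset.mem_filter] at hu
            exact le_of_lt (hno u hu.2)
          calc ∑ u ∈ Finset.univ.filter (fun u : G => u ∉ Zd), ((F u).card : ℝ)
              ≤ (Finset.univ.filter (fun u : G => u ∉ Zd)).card • c :=
                Finset.sum_le_card_nsmul _ _ _ hb
            _ = ((Finset.univ.filter (fun u : G => u ∉ Zd)).card : ℝ) * c := by
                rw [nsmul_eq_mul]
            _ ≤ (N : ℝ) * c := by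
                apply mul_le_mul_of_nonneg_right _ (by positivity)
                exact_mod_cast Finset.card_filter_le _ _
        have hNR : (0:ℝ) < N := by exact_mod_cast hNpos
        have htt : (T.card : ℝ) * T.card < c * T.card + N * c := by
          rw [← hsumR, ← hsplit]; exact add_lt_add_of_lt_of_le hS1 hS2
        rw [hcdef] at htt
        have hA : ε ^ 2 * N ≤ (T.card : ℝ) := by nlinarith
        have hA' := mul_le_mul_of_nonneg_right hA hTpos.le
        have hB : (ε * N) * (ε * N) ≤ (T.card : ℝ) * T.card :=
          mul_le_mul hTN hTN (by positivity) hTpos.le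
        nlinarith
      obtain ⟨u, hu1, hu2⟩ := hex
      have hu3 : ε ^ 2 * N / 2 ≤ (Nat.card (Subgroup.centralizer ({u} : Set G)) : ℝ) :=
        le_trans hu2 (by exact_mod_cast hFC u)
      have hd1u := kerInt_le_of_index_le _ (hidx _ hu3) hd₁
      exact hu1 (Subgroup.mem_centralizer_singleton_iff.mpr
        (Subgroup.mem_centralizer_singleton_iff.mp hd1u).symm)
  exact ⟨⟨fun a b => Subtype.ext (main a.1 b.1 a.2 b.2)⟩⟩
end
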